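/- Fix a real 0 < δ ≤ 1. Let A(ℤ_4^n, d) be the maximum cardinality of a subset C ⊆ ℤ_4^n such that D(c₁,c₂) ≥ d for all distinct c₁, c₂ ∈ C. Then limsup_{n→∞} (1/n)·log₂ A(ℤ_4^n, ⌊δn⌋) ≥ (2−δ)·log₂(2−δ) + δ·log₂ δ. -/

import Mathlib

/-- `hypercubeCodeMax q n d = A(ℤ_q^n, d)`: the maximum cardinality of a subset `C` of
the discrete hypercube `ℤ_q^n` with pairwise L1-distance at least `d`. -/
noncomputable def hypercubeCodeMax (q n d : ℕ) : ℕ :=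
  sSup {m : ℕ | ∃ C : Finset (Fin n → ℤ),
    (∀ u ∈ C, ∀ i, 0 ≤ u i ∧ u i ≤ (q : ℤ) - 1) ∧
    (∀ u ∈ C, ∀ v ∈ C, u ≠ v → (d : ℤ) ≤ ∑ i, |u i - v i|) ∧
    C.card = m}

section HypercubeGV
open Finset

noncomputable def cube (n : ℕ) : Finset (Fin n → ℤ) := Fintype.piFinset (fun _ => Finset.Icc 0 3)

lemma mem_cube {n : ℕ} {u : Fin n → ℤ} : u ∈ cube n ↔ ∀ i, 0 ≤ u i ∧ u i ≤ 3 := by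
  simp [cube, Fintype.mem_piFinset, Finset.mem_Icc]

lemma card_cube (n : ℕ) : (cube n).card = 4 ^ n := by
  simp [cube, Fintype.card_piFinset]

def gray (a : ℤ) : Bool × Bool := (decide (2 ≤ a), decide (a = 1 ∨ a = 2))

lemma gray_inj {a b : ℤ} (ha0 : 0 ≤ a) (ha3 : a ≤ 3) (hb0 : 0 ≤ b) (hb3 : b ≤ 3)
    (h : gray a = gray b) : a = b := by
  interval_cases a <;> interval_cases b <;> simp_all [gray]

lemma gray_dist {a b : ℤ} (ha0 : 0 ≤ a) (ha3 : a ≤ 3) (hb0 : 0 ≤ b) (hb3 : b ≤ 3) :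
    ((if (gray a).1 = (gray b).1 then 0 else 1) + (if (gray a).2 = (gray b).2 then 0 else 1) : ℤ)
      ≤ |a - b| := by
  interval_cases a <;> interval_cases b <;> simp [gray] <;> decide

def gcomp {n : ℕ} (u : Fin n → ℤ) : Fin n × Bool → Bool :=
  fun p => if p.2 then (gray (u p.1)).2 else (gray (u p.1)).1

def Dset {n : ℕ} (c u : Fin n → ℤ) : Finset (Fin n × Bool) :=
  univ.filter (fun p => gcomp u p ≠ gcomp c p)

lemma Dset_card_le {n : ℕ} {c u : Fin n → ℤ} (hc : c ∈ cube n) (hu : u ∈ cube n) :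
    ((Dset c u).card : ℤ) ≤ ∑ i, |u i - c i| := by
  rw [Dset, Finset.card_filter]
  push_cast
  rw [Fintype.sum_prod_type]
  apply Finset.sum_le_sum
  intro i _
  rw [Fintype.sum_bool]
  have h := gray_dist (mem_cube.1 hu i).1 (mem_cube.1 hu i).2
    (mem_cube.1 hc i).1 (mem_cube.1 hc i).2
  simp only [gcomp]
  by_cases h1 : (gray (u i)).1 = (gray (c i)).1 <;>
    by_cases h2 : (gray (u i)).2 = (gray (c i)).2 <;>
      simp [h1, h2] at h ⊢ <;> omega

lemma Dset_inj {n : ℕ} {c u v : Fin n → ℤ} (hc : c ∈ cube n) (hu : u ∈ cube n)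
    (hv : v ∈ cube n) (h : Dset c u = Dset c v) : u = v := by
  have key : ∀ p, gcomp u p = gcomp v p := by
    intro p
    by_cases hp : p ∈ Dset c u
    · have hp' : p ∈ Dset c v := h ▸ hp
      simp only [Dset, Finset.mem_filter] at hp hp'
      have h1 := hp.2; have h2 := hp'.2
      revert h1 h2
      cases gcomp u p <;> cases gcomp v p <;> cases gcomp c p <;> decide
    · have hp' : p ∉ Dset c v := h ▸ hp
      simp only [Dset, Finset.mem_filter, not_and, not_not] at hp hp'
      rw [hp (Finset.mem_univ p), hp' (Finset.mem_univ p)]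
  funext i
  apply gray_inj (mem_cube.1 hu i).1 (mem_cube.1 hu i).2 (mem_cube.1 hv i).1 (mem_cube.1 hv i).2
  have k1 := key (i, false); have k2 := key (i, true)
  simp only [gcomp] at k1 k2
  exact Prod.ext k1 k2

lemma ballBound (n r : ℕ) (c : Fin n → ℤ) (hc : c ∈ cube n) :
    ((cube n).filter (fun u => ∑ i, |u i - c i| ≤ (r : ℤ))).card
      ≤ ∑ j ∈ range (r + 1), Nat.choose (2 * n) j := by
  classical
  set T := (range (r + 1)).biUnion
    (fun j => (univ : Finset (Fin n × Bool)).powersetCard j) with hT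
  have step : ((cube n).filter (fun u => ∑ i, |u i - c i| ≤ (r : ℤ))).card ≤ T.card := by
    apply Finset.card_le_card_of_injOn (fun u => Dset c u)
    · intro u hu
      rw [Finset.mem_coe, Finset.mem_filter] at hu
      have hcard : (Dset c u).card ≤ r := by
        have := Dset_card_le hc hu.1
        have := hu.2
        exact_mod_cast le_trans ‹((Dset c u).card : ℤ) ≤ _› hu.2
      rw [Finset.mem_coe, hT, Finset.mem_biUnion]
      exact ⟨(Dset c u).card, Finset.mem_range.2 (Nat.lt_succ_of_le hcard),
        Finset.mem_powersetCard.2 ⟨Finset.subset_univ _, rfl⟩⟩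
    · intro u hu v hv huv
      rw [Finset.coe_filter] at hu hv
      exact Dset_inj hc hu.1 hv.1 huv
  refine step.trans ?_
  refine (Finset.card_biUnion_le).trans ?_
  apply Finset.sum_le_sum
  intro j _
  rw [Finset.card_powersetCard, Finset.card_univ]
  simp [Fintype.card_prod, mul_comm]

def codeSet (q n d : ℕ) : Set ℕ :=
  {m : ℕ | ∃ C : Finset (Fin n → ℤ),
    (∀ u ∈ C, ∀ i, 0 ≤ u i ∧ u i ≤ (q : ℤ) - 1) ∧
    (∀ u ∈ C, ∀ v ∈ C, u ≠ v → (d : ℤ) ≤ ∑ i, |u i - v i|) ∧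
    C.card = m}

lemma codeSet_bddAbove (n d : ℕ) : BddAbove (codeSet 4 n d) := by
  refine ⟨4 ^ n, ?_⟩
  rintro m ⟨C, hC1, _, rfl⟩
  rw [← card_cube n]
  apply Finset.card_le_card
  intro u hu
  rw [mem_cube]
  intro i
  have := hC1 u hu i
  refine ⟨this.1, ?_⟩
  have h2 := this.2
  push_cast at h2
  linarith

lemma gv (n d : ℕ) (hd : 1 ≤ d) :
    4 ^ n ≤ hypercubeCodeMax 4 n d * ∑ j ∈ range d, Nat.choose (2 * n) j := by
  classical
  set P : Finset (Fin n → ℤ) → Prop :=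
    fun C => ∀ u ∈ C, ∀ v ∈ C, u ≠ v → (d : ℤ) ≤ ∑ i, |u i - v i| with hP
  set F := (cube n).powerset.filter P with hF
  have hne : F.Nonempty := ⟨∅, by simp [hF, hP]⟩
  obtain ⟨C, hCF, hmax⟩ := Finset.exists_max_image F Finset.card hne
  rw [hF, Finset.mem_filter, Finset.mem_powerset] at hCF
  obtain ⟨hCsub, hCP⟩ := hCF
  -- covering property
  have cover : ∀ w ∈ cube n, ∃ c ∈ C, ∑ i, |w i - c i| ≤ ((d - 1 : ℕ) : ℤ) := by
    intro w hw
    by_contra hcon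
    push_neg at hcon
    have hwC : w ∉ C := by
      intro hwC
      have : ((d - 1 : ℕ) : ℤ) < 0 := by simpa using hcon w hwC
      omega
    have hins : insert w C ∈ F := by
      rw [hF, Finset.mem_filter, Finset.mem_powerset]
      constructor
      · exact Finset.insert_subset hw hCsub
      · intro u hu v hv huv
        rw [Finset.mem_insert] at hu hv
        have dist_wc : ∀ c ∈ C, (d : ℤ) ≤ ∑ i, |w i - c i| := by
          intro c hc
          have h1 := hcon c hc
          have h2 : ((d - 1 : ℕ) : ℤ) = (d : ℤ) - 1 := by
            push_cast [Nat.cast_sub hd]; ring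
          omega
        rcases hu with rfl | hu <;> rcases hv with rfl | hv
        · exact absurd rfl huv
        · exact dist_wc v hv
        · simpa [abs_sub_comm] using dist_wc u hu
        · exact hCP u hu v hv huv
    have := hmax _ hins
    rw [Finset.card_insert_of_notMem hwC] at this
    omega
  -- covering gives the bound
  have hsub : cube n ⊆ C.biUnion
      (fun c => (cube n).filter (fun u => ∑ i, |u i - c i| ≤ ((d - 1 : ℕ) : ℤ))) := by
    intro w hw
    rw [Finset.mem_biUnion]
    obtain ⟨c, hc, hdist⟩ := cover w hw
    exact ⟨c, hc, Finset.mem_filter.2 ⟨hw, hdist⟩⟩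
  have hcount : (4 : ℕ) ^ n ≤ C.card * ∑ j ∈ range d, Nat.choose (2 * n) j := by
    calc (4 : ℕ) ^ n = (cube n).card := (card_cube n).symm
      _ ≤ _ := Finset.card_le_card hsub
      _ ≤ ∑ c ∈ C, ((cube n).filter (fun u => ∑ i, |u i - c i| ≤ ((d - 1 : ℕ) : ℤ))).card :=
          Finset.card_biUnion_le
      _ ≤ ∑ c ∈ C, ∑ j ∈ range d, Nat.choose (2 * n) j := by
          apply Finset.sum_le_sum
          intro c hc
          have := ballBound n (d - 1) c (hCsub hc)
          rwa [Nat.sub_add_cancel hd] at this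
      _ = C.card * ∑ j ∈ range d, Nat.choose (2 * n) j := by
          rw [Finset.sum_const, smul_eq_mul]
  refine hcount.trans (Nat.mul_le_mul_right _ ?_)
  apply le_csSup (codeSet_bddAbove n d)
  refine ⟨C, ?_, hCP, rfl⟩
  intro u hu i
  have := mem_cube.1 (hCsub hu) i
  refine ⟨this.1, by norm_num; linarith [this.2]⟩

lemma sumChoose_le (N k : ℕ) (hk : k ≤ N) {x : ℝ} (hx0 : 0 < x) (hx1 : x ≤ 1) :
    (∑ j ∈ range (k + 1), (Nat.choose N j : ℝ)) * x ^ k ≤ (1 + x) ^ N := by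
  have h1 : (∑ j ∈ range (k + 1), (Nat.choose N j : ℝ)) * x ^ k
      ≤ ∑ j ∈ range (k + 1), (Nat.choose N j : ℝ) * x ^ j := by
    rw [Finset.sum_mul]
    apply Finset.sum_le_sum
    intro j hj
    have : x ^ k ≤ x ^ j := pow_le_pow_of_le_one hx0.le hx1 (Nat.lt_succ_iff.1 (mem_range.1 hj))
    exact mul_le_mul_of_nonneg_left this (by positivity)
  have h2 : ∑ j ∈ range (k + 1), (Nat.choose N j : ℝ) * x ^ j
      ≤ ∑ j ∈ range (N + 1), (Nat.choose N j : ℝ) * x ^ j := by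
    apply Finset.sum_le_sum_of_subset_of_nonneg
    · exact Finset.range_subset_range.2 (by omega)
    · intro j _ _; positivity
  have h3 : ∑ j ∈ range (N + 1), (Nat.choose N j : ℝ) * x ^ j = (x + 1) ^ N := by
    rw [add_pow]
    apply Finset.sum_congr rfl
    intro j _
    ring
  rw [show (1 + x : ℝ) = x + 1 by ring]
  linarith

lemma codeMax_le (n d : ℕ) : hypercubeCodeMax 4 n d ≤ 4 ^ n := by
  apply csSup_le
  · exact ⟨0, ∅, by simp⟩
  · rintro m ⟨C, hC1, _, rfl⟩
    rw [← card_cube n]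
    apply Finset.card_le_card
    intro u hu
    rw [mem_cube]
    intro i
    have := hC1 u hu i
    have h2 := this.2
    push_cast at h2
    exact ⟨this.1, by linarith⟩

lemma key (δ : ℝ) (hδ0 : 0 < δ) (hδ1 : δ ≤ 1) (n : ℕ) (hn : 1 ≤ δ * n) :
    (2 - δ) * Real.logb 2 (2 - δ) + δ * Real.logb 2 δ
      ≤ Real.logb 2 (hypercubeCodeMax 4 n ⌊δ * (n : ℝ)⌋₊) / n := by
  set d : ℕ := ⌊δ * (n : ℝ)⌋₊ with hdDef
  have hd1 : 1 ≤ d := Nat.le_floor (by exact_mod_cast hn)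
  have hn0 : 0 < n := by
    rcases Nat.eq_zero_or_pos n with h | h
    · subst h; simp at hn; linarith
    · exact h
  have hnR : (0 : ℝ) < n := by exact_mod_cast hn0
  have hdn : d ≤ n := Nat.floor_le_of_le (by nlinarith)
  have h2δ : (0 : ℝ) < 2 - δ := by linarith
  set x : ℝ := δ / (2 - δ) with hxDef
  have hx0 : 0 < x := div_pos hδ0 h2δ
  have hx1 : x ≤ 1 := (div_le_one h2δ).2 (by linarith)
  set M : ℝ := (hypercubeCodeMax 4 n d : ℝ) with hMDef
  set V : ℝ := ∑ j ∈ range d, (Nat.choose (2 * n) j : ℝ) with hVDef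
  have hMV : (4 : ℝ) ^ n ≤ M * V := by
    have := gv n d hd1
    rw [hMDef, hVDef]
    push_cast
    exact_mod_cast this
  have hV : V * x ^ (d - 1) ≤ (1 + x) ^ (2 * n) := by
    have := sumChoose_le (2 * n) (d - 1) (by omega) hx0 hx1
    rwa [Nat.sub_add_cancel hd1] at this
  have hM0 : (0 : ℝ) < M := by
    rcases lt_or_ge 0 M with h | h
    · exact h
    have hV0 : 0 ≤ V := by positivity
    nlinarith [pow_pos (show (0:ℝ) < 4 by norm_num) n]
  have hV0 : (0 : ℝ) < V := by
    nlinarith [pow_pos (show (0:ℝ) < 4 by norm_num) n]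
  -- M ≥ 4^n x^(d-1) / (1+x)^(2n)
  have hBM : (4 : ℝ) ^ n * x ^ (d - 1) / (1 + x) ^ (2 * n) ≤ M := by
    rw [div_le_iff₀ (by positivity)]
    calc (4 : ℝ) ^ n * x ^ (d - 1) ≤ (M * V) * x ^ (d - 1) :=
          mul_le_mul_of_nonneg_right hMV (by positivity)
      _ = M * (V * x ^ (d - 1)) := by ring
      _ ≤ M * (1 + x) ^ (2 * n) := mul_le_mul_of_nonneg_left hV hM0.le
  have hlog : 2 * (n : ℝ) + ((d : ℝ) - 1) * Real.logb 2 x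
      - 2 * n * Real.logb 2 (1 + x) ≤ Real.logb 2 M := by
    have h := (Real.logb_le_logb one_lt_two (by positivity) hM0).2 hBM
    rw [Real.logb_div (by positivity) (by positivity),
        Real.logb_mul (by positivity) (by positivity),
        Real.logb_pow, Real.logb_pow, Real.logb_pow] at h
    have h4 : Real.logb 2 4 = 2 := by
      rw [show (4 : ℝ) = 2 ^ 2 by norm_num, Real.logb_pow,
        Real.logb_self_eq_one (by norm_num)]
      norm_num
    rw [h4] at h
    have hcast : ((d - 1 : ℕ) : ℝ) = (d : ℝ) - 1 := by
      push_cast [Nat.cast_sub hd1]; ring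
    rw [hcast] at h
    push_cast at h ⊢
    linarith
  have h1 : Real.logb 2 x = Real.logb 2 δ - Real.logb 2 (2 - δ) :=
    Real.logb_div (ne_of_gt hδ0) (ne_of_gt h2δ)
  have h2 : Real.logb 2 (1 + x) = 1 - Real.logb 2 (2 - δ) := by
    have hx2 : 1 + x = 2 / (2 - δ) := by
      rw [hxDef]; field_simp; ring
    rw [hx2, Real.logb_div (by norm_num) (ne_of_gt h2δ),
      Real.logb_self_eq_one (by norm_num)]
  have hLx : Real.logb 2 x ≤ 0 := Real.logb_nonpos one_lt_two hx0.le hx1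
  have hdle : ((d : ℝ) - 1) ≤ δ * n := by
    have := Nat.floor_le (show (0:ℝ) ≤ δ * n by positivity)
    rw [← hdDef] at this
    linarith
  have h3 : δ * n * Real.logb 2 x ≤ ((d : ℝ) - 1) * Real.logb 2 x :=
    mul_le_mul_of_nonpos_right hdle hLx
  rw [le_div_iff₀ hnR]
  rw [h1, h2] at hlog
  rw [h1] at h3
  linarith

end HypercubeGV

/-- The Lee-metric Gilbert–Varshamov lower bound for L1-metric codes in the quaternary
hypercube `ℤ_4^n`: for `0 < δ ≤ 1`, the asymptotic rate is at least
`(2−δ)·log₂(2−δ) + δ·log₂ δ`. -/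
theorem stmt19 (δ : ℝ) (hδ0 : 0 < δ) (hδ1 : δ ≤ 1) :
    (2 - δ) * Real.logb 2 (2 - δ) + δ * Real.logb 2 δ
      ≤ Filter.limsup
          (fun n : ℕ =>
            Real.logb 2 (hypercubeCodeMax 4 n ⌊δ * (n : ℝ)⌋₊) / n)
          Filter.atTop := by

  have hbdd : Filter.IsBoundedUnder (· ≤ ·) Filter.atTop
      (fun n : ℕ => Real.logb 2 (hypercubeCodeMax 4 n ⌊δ * (n : ℝ)⌋₊) / n) := by
    apply Filter.isBoundedUnder_of
    refine ⟨2, fun n => ?_⟩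
    rcases Nat.eq_zero_or_pos n with h | h
    · subst h; simp
    have hnR : (0 : ℝ) < n := by exact_mod_cast h
    rw [div_le_iff₀ hnR]
    set M : ℕ := hypercubeCodeMax 4 n ⌊δ * (n : ℝ)⌋₊ with hM
    rcases Nat.eq_zero_or_pos M with h0 | h0
    · rw [h0]; simp
    have hle : (M : ℝ) ≤ (4 : ℝ) ^ n := by exact_mod_cast codeMax_le n _
    calc Real.logb 2 M ≤ Real.logb 2 ((4 : ℝ) ^ n) := by
          apply (Real.logb_le_logb one_lt_two (by exact_mod_cast h0) (by positivity)).2 hle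
      _ = 2 * n := by
          rw [Real.logb_pow, show (4 : ℝ) = 2 ^ 2 by norm_num, Real.logb_pow,
            Real.logb_self_eq_one (by norm_num)]
          ring
  apply Filter.le_limsup_of_frequently_le _ hbdd
  apply Filter.Eventually.frequently
  rw [Filter.eventually_atTop]
  refine ⟨⌈1 / δ⌉₊ + 1, fun n hn => ?_⟩
  apply key δ hδ0 hδ1 n
  have h1 : (1 : ℝ) / δ ≤ ⌈1 / δ⌉₊ := Nat.le_ceil _
  have h2 : ((⌈1 / δ⌉₊ + 1 : ℕ) : ℝ) ≤ (n : ℝ) := by exact_mod_cast hn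
  have : (1 : ℝ) / δ ≤ n := by push_cast at h2; linarith
  rw [div_le_iff₀ hδ0] at this
  linarith
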